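/- Let (a1,...,a6) be nonnegative integers with a6 >= ai for all i, a6 > 0, and satisfying a1 > a3+a5, a1 > a2+a4, a6 > a4+a5 and a6 > a2+a3 (i.e. the tuple is S-minimal with a6 maximal). Then the tetrahedral ideal I(a1,...,a6) is generated by the set of monomials a^{l1} b^{l2} c^{l3} d^{l4} with l1+l2 = a1, l3+l4 = a6, l1+l3 >= a2, l1+l4 >= a3, l2+l3 >= a4 and l2+l4 >= a5. In particular, I(a1,...,a6) is generated by monomials of total degree a1+a6. -/

import Mathlib

open MvPolynomial

/-- The tetrahedral ideal `(a,b)^{a1} ∩ (a,c)^{a2} ∩ (a,d)^{a3} ∩ (b,c)^{a4} ∩ (b,d)^{a5} ∩ (c,d)^{a6}`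
in `R = k[a,b,c,d]`, realized as `MvPolynomial (Fin 4) k` with `a = X 0`, `b = X 1`, `c = X 2`,
`d = X 3`.  The 0-th power of an ideal is the unit ideal. -/
noncomputable def tet (k : Type) [Field k] (a1 a2 a3 a4 a5 a6 : ℕ) :
    Ideal (MvPolynomial (Fin 4) k) :=
  Ideal.span {X 0, X 1} ^ a1 ⊓ Ideal.span {X 0, X 2} ^ a2 ⊓ Ideal.span {X 0, X 3} ^ a3 ⊓
    Ideal.span {X 1, X 2} ^ a4 ⊓ Ideal.span {X 1, X 3} ^ a5 ⊓ Ideal.span {X 2, X 3} ^ a6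

set_option maxHeartbeats 4000000 in
/-- Combinatorial core: a monomial satisfying the six lower bounds is divisible by a generator. -/
lemma comb_lemma (a1 a2 a3 a4 a5 a6 l1 l2 l3 l4 : ℕ)
    (hmax : a1 ≤ a6 ∧ a2 ≤ a6 ∧ a3 ≤ a6 ∧ a4 ≤ a6 ∧ a5 ≤ a6)
    (h1 : a3 + a5 < a1) (h2 : a2 + a4 < a1) (h3 : a4 + a5 < a6) (h4 : a2 + a3 < a6)
    (g1 : a1 ≤ l1 + l2) (g2 : a2 ≤ l1 + l3) (g3 : a3 ≤ l1 + l4)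
    (g4 : a4 ≤ l2 + l3) (g5 : a5 ≤ l2 + l4) (g6 : a6 ≤ l3 + l4) :
    ∃ n1 n2 n3 n4 : ℕ, n1 ≤ l1 ∧ n2 ≤ l2 ∧ n3 ≤ l3 ∧ n4 ≤ l4 ∧
      n1 + n2 = a1 ∧ n3 + n4 = a6 ∧ a2 ≤ n1 + n3 ∧ a3 ≤ n1 + n4 ∧
      a4 ≤ n2 + n3 ∧ a5 ≤ n2 + n4 := by
  set n2 : ℕ := max (a1 - l1) (max (a4 - min l3 a6) ((a6 - l4) - (a6 - a5))) with hn2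
  set n3 : ℕ := max (a6 - l4) (max (a4 - n2) (n2 - (a1 - a2))) with hn3
  refine ⟨a1 - n2, n2, n3, a6 - n3, ?_, ?_, ?_, ?_, ?_, ?_, ?_, ?_, ?_, ?_⟩ <;> omega

/-- A power of the ideal generated by two variables is contained in the monomial ideal
cut out by the corresponding degree bound. -/
lemma pow_span_le (k : Type) [Field k] (i j : Fin 4) (n : ℕ) :
    (Ideal.span {X i, X j} : Ideal (MvPolynomial (Fin 4) k)) ^ n ≤
      Ideal.span ((fun s => monomial s (1 : k)) '' {m : Fin 4 →₀ ℕ | n ≤ m i + m j}) := by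
  induction n with
  | zero =>
    intro p _
    rw [mem_ideal_span_monomial_image]
    intro xi _
    exact ⟨0, by simp, zero_le⟩
  | succ n ih =>
    rw [pow_succ]
    have hI : (Ideal.span {X i, X j} : Ideal (MvPolynomial (Fin 4) k)) ≤
        Ideal.span ((fun s => monomial s (1 : k)) '' {m : Fin 4 →₀ ℕ | 1 ≤ m i + m j}) := by
      rw [Ideal.span_le]
      rintro q hq
      rcases hq with rfl | hq
      · exact Ideal.subset_span ⟨Finsupp.single i 1, by simp, rfl⟩
      · rw [Set.mem_singleton_iff] at hq
        subst hq
        exact Ideal.subset_span ⟨Finsupp.single j 1, by simp [Finsupp.single_apply], rfl⟩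
    refine le_trans (Ideal.mul_mono ih hI) ?_
    · rw [Ideal.mul_le]
      intro r hr s hs
      rw [mem_ideal_span_monomial_image] at hr hs ⊢
      intro xi hxi
      classical
      have := MvPolynomial.support_mul r s hxi
      rw [Finset.mem_add] at this
      obtain ⟨u, hu, v, hv, rfl⟩ := this
      obtain ⟨su, hsu, hsu'⟩ := hr u hu
      obtain ⟨sv, hsv, hsv'⟩ := hs v hv
      refine ⟨su + sv, ?_, add_le_add hsu' hsv'⟩
      simp only [Set.mem_setOf_eq, Finsupp.add_apply] at hsu hsv ⊢
      omega

lemma support_bound (k : Type) [Field k] (i j : Fin 4) (n : ℕ) {p : MvPolynomial (Fin 4) k}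
    (hp : p ∈ (Ideal.span {X i, X j} : Ideal (MvPolynomial (Fin 4) k)) ^ n) :
    ∀ m ∈ p.support, n ≤ m i + m j := by
  intro m hm
  have := pow_span_le k i j n hp
  rw [mem_ideal_span_monomial_image] at this
  obtain ⟨s, hs, hsm⟩ := this m hm
  have h1 : s i ≤ m i := hsm i
  have h2 : s j ≤ m j := hsm j
  simp only [Set.mem_setOf_eq] at hs
  omega

lemma mem_pow_pair {R : Type*} [CommRing R] {I : Ideal R} {x y : R}
    (hx : x ∈ I) (hy : y ∈ I) {a b c : ℕ} (h : c ≤ a + b) : x ^ a * y ^ b ∈ I ^ c := by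
  have h1 := Ideal.mul_mem_mul (Ideal.pow_mem_pow hx a) (Ideal.pow_mem_pow hy b)
  rw [← pow_add] at h1
  exact Ideal.pow_le_pow_right h h1

/-- For an S-minimal tetrahedral curve with `a6` maximal, the ideal is generated by the
monomials `a^{l1} b^{l2} c^{l3} d^{l4}` with `l1+l2 = a1`, `l3+l4 = a6`, `l1+l3 ≥ a2`,
`l1+l4 ≥ a3`, `l2+l3 ≥ a4`, `l2+l4 ≥ a5`; in particular it is generated by monomials of
total degree `a1 + a6`. -/
theorem stmt_6 (k : Type) [Field k] (a1 a2 a3 a4 a5 a6 : ℕ)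
    (hmax : a1 ≤ a6 ∧ a2 ≤ a6 ∧ a3 ≤ a6 ∧ a4 ≤ a6 ∧ a5 ≤ a6) (hpos : 0 < a6)
    (h1 : a3 + a5 < a1) (h2 : a2 + a4 < a1) (h3 : a4 + a5 < a6) (h4 : a2 + a3 < a6) :
    letI G : Set (MvPolynomial (Fin 4) k) :=
      {p | ∃ l1 l2 l3 l4 : ℕ, l1 + l2 = a1 ∧ l3 + l4 = a6 ∧
        a2 ≤ l1 + l3 ∧ a3 ≤ l1 + l4 ∧ a4 ≤ l2 + l3 ∧ a5 ≤ l2 + l4 ∧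
        p = X 0 ^ l1 * X 1 ^ l2 * X 2 ^ l3 * X 3 ^ l4}
    tet k a1 a2 a3 a4 a5 a6 = Ideal.span G ∧ ∀ p ∈ G, p.totalDegree = a1 + a6 := by
  have hGdeg : ∀ p ∈ {p : MvPolynomial (Fin 4) k | ∃ l1 l2 l3 l4 : ℕ, l1 + l2 = a1 ∧ l3 + l4 = a6 ∧
        a2 ≤ l1 + l3 ∧ a3 ≤ l1 + l4 ∧ a4 ≤ l2 + l3 ∧ a5 ≤ l2 + l4 ∧
        p = X 0 ^ l1 * X 1 ^ l2 * X 2 ^ l3 * X 3 ^ l4}, p.totalDegree = a1 + a6 := by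
    rintro p ⟨l1, l2, l3, l4, e1, e2, _, _, _, _, rfl⟩
    rw [X_pow_eq_monomial, X_pow_eq_monomial, X_pow_eq_monomial, X_pow_eq_monomial,
      monomial_mul, monomial_mul, monomial_mul, mul_one, mul_one, mul_one,
      totalDegree_monomial _ (one_ne_zero)]
    rw [Finsupp.sum_add_index' (fun _ => rfl) (fun _ _ _ => rfl),
      Finsupp.sum_add_index' (fun _ => rfl) (fun _ _ _ => rfl),
      Finsupp.sum_add_index' (fun _ => rfl) (fun _ _ _ => rfl),
      Finsupp.sum_single_index rfl, Finsupp.sum_single_index rfl,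
      Finsupp.sum_single_index rfl, Finsupp.sum_single_index rfl]
    omega
  refine ⟨le_antisymm ?_ ?_, hGdeg⟩
  · -- tet ≤ span G
    intro p hp
    obtain ⟨⟨⟨⟨⟨m1, m2⟩, m3⟩, m4⟩, m5⟩, m6⟩ := hp
    set T : Set (Fin 4 →₀ ℕ) := {m | ∃ n1 n2 n3 n4 : ℕ, n1 + n2 = a1 ∧ n3 + n4 = a6 ∧
      a2 ≤ n1 + n3 ∧ a3 ≤ n1 + n4 ∧ a4 ≤ n2 + n3 ∧ a5 ≤ n2 + n4 ∧
      m = Finsupp.single 0 n1 + Finsupp.single 1 n2 + Finsupp.single 2 n3 +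
        Finsupp.single 3 n4} with hT
    have key : p ∈ Ideal.span ((fun s => monomial s (1 : k)) '' T) := by
      rw [mem_ideal_span_monomial_image]
      intro xi hxi
      obtain ⟨n1, n2, n3, n4, c1, c2, c3, c4, c5, c6, c7, c8, c9, c10⟩ :=
        comb_lemma a1 a2 a3 a4 a5 a6 (xi 0) (xi 1) (xi 2) (xi 3) hmax h1 h2 h3 h4
          (support_bound k 0 1 a1 m1 xi hxi) (support_bound k 0 2 a2 m2 xi hxi)
          (support_bound k 0 3 a3 m3 xi hxi) (support_bound k 1 2 a4 m4 xi hxi)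
          (support_bound k 1 3 a5 m5 xi hxi) (support_bound k 2 3 a6 m6 xi hxi)
      refine ⟨Finsupp.single 0 n1 + Finsupp.single 1 n2 + Finsupp.single 2 n3 +
        Finsupp.single 3 n4, ⟨n1, n2, n3, n4, c5, c6, c7, c8, c9, c10, rfl⟩, ?_⟩
      intro x
      fin_cases x <;> simp [Finsupp.single_apply] <;> omega
    refine Ideal.span_le.mpr ?_ key
    rintro q ⟨m, ⟨n1, n2, n3, n4, c1, c2, c3, c4, c5, c6, rfl⟩, rfl⟩
    refine Ideal.subset_span ⟨n1, n2, n3, n4, c1, c2, c3, c4, c5, c6, ?_⟩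
    rw [X_pow_eq_monomial, X_pow_eq_monomial, X_pow_eq_monomial, X_pow_eq_monomial,
      monomial_mul, monomial_mul, monomial_mul, mul_one, mul_one, mul_one]
  · -- span G ≤ tet
    rw [Ideal.span_le]
    rintro p ⟨l1, l2, l3, l4, e1, e2, e3, e4, e5, e6, rfl⟩
    have hX : ∀ (i j : Fin 4), (X i : MvPolynomial (Fin 4) k) ∈
        (Ideal.span {X i, X j} : Ideal (MvPolynomial (Fin 4) k)) :=
      fun i j => Ideal.subset_span (Set.mem_insert _ _)
    have hY : ∀ (i j : Fin 4), (X j : MvPolynomial (Fin 4) k) ∈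
        (Ideal.span {X i, X j} : Ideal (MvPolynomial (Fin 4) k)) :=
      fun i j => Ideal.subset_span (Set.mem_insert_of_mem _ rfl)
    refine ⟨⟨⟨⟨⟨?_, ?_⟩, ?_⟩, ?_⟩, ?_⟩, ?_⟩
    · rw [show (X 0 ^ l1 * X 1 ^ l2 * X 2 ^ l3 * X 3 ^ l4 : MvPolynomial (Fin 4) k) =
        (X 0 ^ l1 * X 1 ^ l2) * (X 2 ^ l3 * X 3 ^ l4) by ring]
      exact Ideal.mul_mem_right _ _ (mem_pow_pair (hX 0 1) (hY 0 1) (by omega))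
    · rw [show (X 0 ^ l1 * X 1 ^ l2 * X 2 ^ l3 * X 3 ^ l4 : MvPolynomial (Fin 4) k) =
        (X 0 ^ l1 * X 2 ^ l3) * (X 1 ^ l2 * X 3 ^ l4) by ring]
      exact Ideal.mul_mem_right _ _ (mem_pow_pair (hX 0 2) (hY 0 2) (by omega))
    · rw [show (X 0 ^ l1 * X 1 ^ l2 * X 2 ^ l3 * X 3 ^ l4 : MvPolynomial (Fin 4) k) =
        (X 0 ^ l1 * X 3 ^ l4) * (X 1 ^ l2 * X 2 ^ l3) by ring]
      exact Ideal.mul_mem_right _ _ (mem_pow_pair (hX 0 3) (hY 0 3) (by omega))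
    · rw [show (X 0 ^ l1 * X 1 ^ l2 * X 2 ^ l3 * X 3 ^ l4 : MvPolynomial (Fin 4) k) =
        (X 1 ^ l2 * X 2 ^ l3) * (X 0 ^ l1 * X 3 ^ l4) by ring]
      exact Ideal.mul_mem_right _ _ (mem_pow_pair (hX 1 2) (hY 1 2) (by omega))
    · rw [show (X 0 ^ l1 * X 1 ^ l2 * X 2 ^ l3 * X 3 ^ l4 : MvPolynomial (Fin 4) k) =
        (X 1 ^ l2 * X 3 ^ l4) * (X 0 ^ l1 * X 2 ^ l3) by ring]
      exact Ideal.mul_mem_right _ _ (mem_pow_pair (hX 1 3) (hY 1 3) (by omega))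
    · rw [show (X 0 ^ l1 * X 1 ^ l2 * X 2 ^ l3 * X 3 ^ l4 : MvPolynomial (Fin 4) k) =
        (X 2 ^ l3 * X 3 ^ l4) * (X 0 ^ l1 * X 1 ^ l2) by ring]
      exact Ideal.mul_mem_right _ _ (mem_pow_pair (hX 2 3) (hY 2 3) (by omega))
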